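/- Define h(z) = −log(1−z) and g(z) = −z − log(1−z) on the unit disk 𝔻, where log is the principal branch of the complex logarithm. Then f = h + conj(g) belongs to the class F(1/2) (with θ = 0), and the Taylor coefficients of h and g satisfy a_n = 1/n and b_n = 1/n for all n ≥ 2; in particular |a_n| = A_n(1/2) and |b_n| = ((n−1)/(n−1))·A_n(1/2), so the coefficient bounds |a_n| ≤ A_n(α) and |b_n| ≤ ((n−1)/(n−2α))·A_n(α) are attained at α = 1/2. -/

import Mathlib

open Complex Metric ComplexConjugate

/-- `L(r,α) = ∫₀^r (1−ρ)(1+ρ)^{2α−2} dρ`. -/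
noncomputable def Lfun (r α : ℝ) : ℝ := ∫ ρ in (0:ℝ)..r, (1 - ρ) * (1 + ρ) ^ (2 * α - 2)

/-- `A(r,α) = ((1−r²)/r²)·L(r,α)²`. -/
noncomputable def Afun (r α : ℝ) : ℝ := ((1 - r ^ 2) / r ^ 2) * (Lfun r α) ^ 2

/-- `A_k(α) = (1/k!)·∏_{j=2}^k (j − 2α)`. -/
noncomputable def coefA (α : ℝ) (k : ℕ) : ℝ :=
  (1 / (Nat.factorial k : ℝ)) * ∏ j ∈ Finset.Icc 2 k, ((j : ℝ) - 2 * α)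

/-- `ψ(n,m,r,α)`. -/
noncomputable def psiFun (n m : ℕ) (r α : ℝ) : ℝ :=
  Afun r α
    - ∑' k : ℕ, (((n : ℝ) + 1 + k) * coefA α (n + 1 + k) * r ^ (n + k))
    - ∑' k : ℕ, ((((m : ℝ) + 1 + k) * (((m : ℝ) + 1 + k) - 1) / (((m : ℝ) + 1 + k) - 2 * α))
        * coefA α (m + 1 + k) * r ^ (m + k))

/-- Membership in the class `F(α)`. -/
def MemF (α : ℝ) (h g : ℂ → ℂ) : Prop :=
  DifferentiableOn ℂ h (ball 0 1) ∧ DifferentiableOn ℂ g (ball 0 1) ∧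
  h 0 = 0 ∧ g 0 = 0 ∧ deriv h 0 = 1 ∧
  (∀ z ∈ ball (0 : ℂ) 1, deriv h z ≠ 0) ∧
  (∀ z ∈ ball (0 : ℂ) 1, α < (1 + z * deriv (deriv h) z / deriv h z).re) ∧
  (∃ θ : ℝ, ∀ z ∈ ball (0 : ℂ) 1, deriv g z = Complex.exp (θ * Complex.I) * z * deriv h z)

lemma slit_mem {z : ℂ} (hz : ‖z‖ < 1) : (1 - z) ∈ Complex.slitPlane := by
  rw [Complex.mem_slitPlane_iff]
  left
  have h1 : |z.re| ≤ ‖z‖ := Complex.abs_re_le_norm z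
  have : ‖z‖ < 1 := hz
  simp only [Complex.sub_re, Complex.one_re]
  cases' abs_le.mp h1 with h2 h3
  linarith

lemma onesub_ne {z : ℂ} (hz : ‖z‖ < 1) : (1 - z) ≠ 0 :=
  Complex.slitPlane_ne_zero (slit_mem hz)

lemma hasDerivAt_hfun {z : ℂ} (hz : ‖z‖ < 1) :
    HasDerivAt (fun w => -Complex.log (1 - w)) ((1 - z)⁻¹) z := by
  have h1 : HasDerivAt (fun w : ℂ => 1 - w) (-1) z := by
    simpa using (hasDerivAt_id z).const_sub 1
  have h2 := ((Complex.hasDerivAt_log (slit_mem hz)).comp z h1).neg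
  convert h2 using 1
  · rfl
  · rfl
  · rfl
  · ring

lemma hasDerivAt_hfun' {z : ℂ} (hz : ‖z‖ < 1) :
    HasDerivAt (fun w : ℂ => (1 - w)⁻¹) ((1 - z)⁻¹ ^ 2) z := by
  have h1 : HasDerivAt (fun w : ℂ => 1 - w) (-1) z := by
    simpa using (hasDerivAt_id z).const_sub 1
  have := h1.inv (onesub_ne hz)
  convert this using 1
  · rfl
  · rfl
  · rfl
  · rw [neg_neg, one_div, inv_pow]

lemma normSq_lt {z : ℂ} (hz : ‖z‖ < 1) : z.re ^ 2 + z.im ^ 2 < 1 := by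
  have h1 : Complex.normSq z < 1 := by
    have : Complex.normSq z = ‖z‖ ^ 2 := (Complex.sq_norm z).symm
    rw [this]
    nlinarith [norm_nonneg z]
  simpa [Complex.normSq_apply, sq] using h1

lemma re_inv_gt {z : ℂ} (hz : ‖z‖ < 1) : (1 / 2 : ℝ) < ((1 - z)⁻¹).re := by
  have hne := onesub_ne hz
  have hpos : 0 < Complex.normSq (1 - z) := Complex.normSq_pos.mpr hne
  rw [Complex.inv_re]
  rw [lt_div_iff₀ hpos]
  have h1 := normSq_lt hz
  simp only [Complex.normSq_apply, Complex.sub_re, Complex.sub_im, Complex.one_re,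
    Complex.one_im]
  nlinarith

lemma prod_fact : ∀ n : ℕ, 1 ≤ n →
    ∏ j ∈ Finset.Icc 2 n, ((j : ℝ) - 1) = (Nat.factorial (n - 1) : ℝ) := by
  intro n hn
  induction n with
  | zero => omega
  | succ m ih =>
    rcases Nat.eq_or_lt_of_le hn with h | h
    · simp [← h]
    · have hm : 1 ≤ m := by omega
      rw [Finset.prod_Icc_succ_top (by omega : 2 ≤ m + 1), ih hm,
        show m + 1 - 1 = m from rfl, ← Nat.mul_factorial_pred (by omega : m ≠ 0)]
      push_cast
      ring

lemma coefA_half {n : ℕ} (hn : 2 ≤ n) : coefA (1 / 2) n = 1 / n := by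
  unfold coefA
  have : ∀ j ∈ Finset.Icc 2 n, ((j : ℝ) - 2 * (1 / 2)) = ((j : ℝ) - 1) := by
    intro j _; ring
  rw [Finset.prod_congr rfl this, prod_fact n (by omega)]
  rw [← Nat.mul_factorial_pred (by omega : n ≠ 0)]
  have h1 : (0:ℝ) < n := by exact_mod_cast (by omega : 0 < n)
  have h2 : (0:ℝ) < Nat.factorial (n - 1) := by positivity
  push_cast
  field_simp

/-- The extremal function for `α = 1/2`: `h(z) = −log(1−z)`, `g(z) = −z − log(1−z)`.
It belongs to `F(1/2)` (with `θ = 0`), has Taylor coefficients `a_n = b_n = 1/n` for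
`n ≥ 2`, and attains the coefficient bounds. -/
theorem extremal_function_alpha_half
    (h g : ℂ → ℂ)
    (hdef : ∀ z, h z = -Complex.log (1 - z))
    (gdef : ∀ z, g z = -z - Complex.log (1 - z)) :
    (DifferentiableOn ℂ h (ball 0 1) ∧ DifferentiableOn ℂ g (ball 0 1) ∧
      h 0 = 0 ∧ g 0 = 0 ∧ deriv h 0 = 1 ∧
      (∀ z ∈ ball (0 : ℂ) 1, deriv h z ≠ 0) ∧
      (∀ z ∈ ball (0 : ℂ) 1, (1 / 2 : ℝ) < (1 + z * deriv (deriv h) z / deriv h z).re) ∧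
      (∀ z ∈ ball (0 : ℂ) 1,
        deriv g z = Complex.exp ((0 : ℝ) * Complex.I) * z * deriv h z)) ∧
    (∀ z ∈ ball (0 : ℂ) 1,
      HasSum (fun n : ℕ => (if n = 0 then 0 else 1 / (n : ℂ)) * z ^ n) (h z)) ∧
    (∀ z ∈ ball (0 : ℂ) 1,
      HasSum (fun n : ℕ => (if n ≤ 1 then 0 else 1 / (n : ℂ)) * z ^ n) (g z)) ∧
    (∀ n : ℕ, 2 ≤ n →
      ‖(1 / (n : ℂ))‖ = coefA (1 / 2) n ∧
      ‖(1 / (n : ℂ))‖ = (((n : ℝ) - 1) / ((n : ℝ) - 1)) * coefA (1 / 2) n) := by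
  have heq : h = fun w => -Complex.log (1 - w) := funext hdef
  have geq : g = fun w => -w - Complex.log (1 - w) := funext gdef
  have hball : ∀ z : ℂ, z ∈ ball (0 : ℂ) 1 → ‖z‖ < 1 := by
    intro z hz; rwa [mem_ball_zero_iff] at hz
  -- deriv h on ball
  have hderiv : ∀ z : ℂ, ‖z‖ < 1 → deriv h z = (1 - z)⁻¹ := by
    intro z hz
    rw [heq]
    exact (hasDerivAt_hfun hz).deriv
  have gderiv : ∀ z : ℂ, ‖z‖ < 1 → deriv g z = (1 - z)⁻¹ - 1 := by
    intro z hz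
    rw [geq]
    have h1 : HasDerivAt (fun w : ℂ => -w - Complex.log (1 - w)) ((1 - z)⁻¹ - 1) z := by
      have h2 : HasDerivAt (fun w : ℂ => -w) (-1) z := (hasDerivAt_id z).neg
      have h3 := h2.add (hasDerivAt_hfun hz)
      convert h3 using 1
      · rfl
      · rfl
      · funext w; simp only [Pi.add_apply]; ring
      · ring
    exact h1.deriv
  have hderiv2 : ∀ z : ℂ, ‖z‖ < 1 → deriv (deriv h) z = (1 - z)⁻¹ ^ 2 := by
    intro z hz
    have hev : deriv h =ᶠ[nhds z] (fun w : ℂ => (1 - w)⁻¹) := by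
      have hmem : ball (0 : ℂ) 1 ∈ nhds z :=
        isOpen_ball.mem_nhds (mem_ball_zero_iff.mpr hz)
      filter_upwards [hmem] with w hw
      exact hderiv w (hball w hw)
    rw [hev.deriv_eq]
    exact (hasDerivAt_hfun' hz).deriv
  refine ⟨⟨?_, ?_, ?_, ?_, ?_, ?_, ?_, ?_⟩, ?_, ?_, ?_⟩
  · -- h differentiable
    intro z hz
    exact ((hasDerivAt_hfun (hball z hz)).differentiableAt.congr_of_eventuallyEq
      (by filter_upwards with w using (hdef w))).differentiableWithinAt
  · intro z hz
    have h1 : HasDerivAt g ((1 - z)⁻¹ - 1) z := by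
      rw [geq]
      have h2 : HasDerivAt (fun w : ℂ => -w) (-1) z := (hasDerivAt_id z).neg
      have h3 := h2.add (hasDerivAt_hfun (hball z hz))
      convert h3 using 1
      · rfl
      · rfl
      · funext w; simp only [Pi.add_apply]; ring
      · ring
    exact h1.differentiableAt.differentiableWithinAt
  · simp [hdef]
  · simp [gdef]
  · rw [hderiv 0 (by simp)]; simp
  · intro z hz
    rw [hderiv z (hball z hz)]
    exact inv_ne_zero (onesub_ne (hball z hz))
  · intro z hz
    have hz' := hball z hz
    rw [hderiv z hz', hderiv2 z hz']
    have hne := onesub_ne hz'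
    have hsimp : 1 + z * (1 - z)⁻¹ ^ 2 / (1 - z)⁻¹ = (1 - z)⁻¹ := by
      field_simp
      ring
    rw [hsimp]
    exact re_inv_gt hz'
  · intro z hz
    have hz' := hball z hz
    rw [gderiv z hz', hderiv z hz']
    have hne := onesub_ne hz'
    rw [show ((0 : ℝ) : ℂ) * Complex.I = 0 by simp, Complex.exp_zero]
    field_simp
    ring
  · intro z hz
    have hz' := hball z hz
    have h1 := Complex.hasSum_taylorSeries_neg_log hz'
    rw [hdef]
    have hfun : (fun n : ℕ => (if n = 0 then 0 else 1 / (n : ℂ)) * z ^ n)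
        = fun n : ℕ => z ^ n / (n : ℂ) := by
      funext n
      rcases Nat.eq_zero_or_pos n with rfl | hn
      · simp
      · rw [if_neg hn.ne', mul_comm, mul_one_div]
    rw [hfun]
    exact h1
  · intro z hz
    have hz' := hball z hz
    have h1 := Complex.hasSum_taylorSeries_neg_log hz'
    have h2 : HasSum (fun n : ℕ => if n = 1 then z else 0) z := hasSum_ite_eq 1 z
    have h3 := h1.sub h2
    rw [gdef]
    have hfun : (fun n : ℕ => (if n ≤ 1 then 0 else 1 / (n : ℂ)) * z ^ n)
        = fun n : ℕ => z ^ n / (n : ℂ) - if n = 1 then z else 0 := by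
      funext n
      match n with
      | 0 => simp
      | 1 => simp
      | (k+2) =>
        rw [if_neg (by omega), if_neg (by omega), sub_zero, mul_comm, mul_one_div]
    rw [hfun, show -z - Complex.log (1 - z) = -Complex.log (1 - z) - z by ring]
    exact h3
  · intro n hn
    have h1 : ‖(1 / (n : ℂ))‖ = 1 / (n : ℝ) := by
      rw [norm_div, norm_one, Complex.norm_natCast]
    have h2 := coefA_half hn
    constructor
    · rw [h1, h2]
    · rw [h1, h2]
      have : ((n : ℝ) - 1) ≠ 0 := by
        have : (2:ℝ) ≤ n := by exact_mod_cast hn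
        linarith
      field_simp
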